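/- Let o have residue field of characteristic 2, r ≥ 2, ℓ = ⌈r/2⌉, ℓ' = ⌊r/2⌋, and fix a character ψ of o_r with ψ(π^{r−1}) ≠ 1. For matrices B₁ = [[0, a₁⁻¹α₁],[a₁, β₁]] and B₂ = [[0, a₂⁻¹α₂],[a₂, β₂]] in M_2(o_{ℓ'}), there exists g ∈ SL_2(o_{ℓ'}) and s ∈ o_{ℓ'} with g B₁ g⁻¹ = B₂ + sI if and only if there exists s ∈ o_{ℓ'} with β₂ = β₁ − 2s, α₂ = α₁ − s² + sβ₁, and a₂a₁⁻¹ ∈ det(C_{GL_2(o_{ℓ'})}(B₁)). -/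

import Mathlib

section Stmt15Aux

variable {R : Type*} [CommRing R]

lemma stmt15_add_smul_one (a b c d s : R) :
    !![a, b; c, d] + s • (1 : Matrix (Fin 2) (Fin 2) R) = !![a + s, b; c, d + s] := by
  ext i j
  fin_cases i <;> fin_cases j <;> simp [Matrix.one_apply]

lemma stmt15_kconj (a₁ a₂ : Rˣ) (α₁ β₁ α₂ β₂ s : R)
    (hβ : β₂ = β₁ - 2 * s) (hα : α₂ = α₁ - s ^ 2 + s * β₁) :
    !![1, (↑a₁⁻¹ : R) * s; 0, (↑a₁⁻¹ : R) * ↑a₂] * !![0, (↑a₁⁻¹ : R) * α₁; (↑a₁ : R), β₁] =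
      (!![0, (↑a₂⁻¹ : R) * α₂; (↑a₂ : R), β₂] + s • 1) *
        !![1, (↑a₁⁻¹ : R) * s; 0, (↑a₁⁻¹ : R) * ↑a₂] := by
  have h1 : ((↑a₁⁻¹ : R) * ↑a₁ : R) = 1 := a₁.inv_mul
  have h2 : ((↑a₂⁻¹ : R) * ↑a₂ : R) = 1 := a₂.inv_mul
  rw [stmt15_add_smul_one]
  ext i j
  fin_cases i <;> fin_cases j <;>
    simp [Matrix.mul_apply, Fin.sum_univ_two]
  · linear_combination s * h1
  · linear_combination (-(↑a₁⁻¹ : R) * α₂) * h2 - (↑a₁⁻¹ : R) * hα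
  · linear_combination (↑a₂ : R) * h1
  · linear_combination (-(↑a₁⁻¹ : R) * ↑a₂) * hβ

lemma stmt15_key (a₁ a₂ : Rˣ) (α₁ β₁ α₂ β₂ : R) :
    (∃ (g : Matrix.SpecialLinearGroup (Fin 2) R) (s : R),
        (g : Matrix (Fin 2) (Fin 2) R) * !![0, (↑a₁⁻¹ : R) * α₁; (↑a₁ : R), β₁] *
            ((g⁻¹ : Matrix.SpecialLinearGroup (Fin 2) R) : Matrix (Fin 2) (Fin 2) R) =
          !![0, (↑a₂⁻¹ : R) * α₂; (↑a₂ : R), β₂] + s • (1 : Matrix (Fin 2) (Fin 2) R)) ↔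
      (∃ s : R,
        β₂ = β₁ - 2 * s ∧
        α₂ = α₁ - s ^ 2 + s * β₁ ∧
        ∃ M : Matrix (Fin 2) (Fin 2) R,
          M * !![0, (↑a₁⁻¹ : R) * α₁; (↑a₁ : R), β₁] =
            !![0, (↑a₁⁻¹ : R) * α₁; (↑a₁ : R), β₁] * M ∧
          IsUnit M.det ∧ M.det = (↑a₂ : R) * (↑a₁⁻¹ : R)) := by
  have h1 : ((↑a₁⁻¹ : R) * ↑a₁ : R) = 1 := a₁.inv_mul
  have h2 : ((↑a₂⁻¹ : R) * ↑a₂ : R) = 1 := a₂.inv_mul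
  set B₁ : Matrix (Fin 2) (Fin 2) R := !![0, (↑a₁⁻¹ : R) * α₁; (↑a₁ : R), β₁] with hB₁
  constructor
  · rintro ⟨g, s, hg⟩
    set G : Matrix (Fin 2) (Fin 2) R := ↑g with hG
    set Gi : Matrix (Fin 2) (Fin 2) R := ↑(g⁻¹) with hGi
    have hGiG : Gi * G = 1 := by
      rw [hG, hGi, ← Matrix.SpecialLinearGroup.coe_mul, inv_mul_cancel,
        Matrix.SpecialLinearGroup.coe_one]
    rw [stmt15_add_smul_one] at hg
    -- trace
    have ht := congrArg Matrix.trace hg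
    rw [Matrix.trace_mul_cycle, hGiG, one_mul] at ht
    rw [Matrix.trace_fin_two_of, Matrix.trace_fin_two_of] at ht
    -- det
    have hd := congrArg Matrix.det hg
    rw [Matrix.det_mul, Matrix.det_mul, g.prop, (g⁻¹).prop, one_mul, mul_one] at hd
    rw [Matrix.det_fin_two_of, Matrix.det_fin_two_of] at hd
    have hβ : β₂ = β₁ - 2 * s := by linear_combination -ht
    have hα : α₂ = α₁ - s ^ 2 + s * β₁ := by
      linear_combination hd + α₁ * h1 - α₂ * h2 + s * hβ
    refine ⟨s, hβ, hα, Gi * !![1, (↑a₁⁻¹ : R) * s; 0, (↑a₁⁻¹ : R) * ↑a₂], ?_, ?_, ?_⟩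
    · have hk := stmt15_kconj a₁ a₂ α₁ β₁ α₂ β₂ s hβ hα
      rw [stmt15_add_smul_one] at hk
      rw [← hg] at hk
      calc Gi * !![1, (↑a₁⁻¹ : R) * s; 0, (↑a₁⁻¹ : R) * ↑a₂] * B₁
          = Gi * (!![1, (↑a₁⁻¹ : R) * s; 0, (↑a₁⁻¹ : R) * ↑a₂] * B₁) := by
            rw [mul_assoc]
        _ = Gi * (G * B₁ * Gi * !![1, (↑a₁⁻¹ : R) * s; 0, (↑a₁⁻¹ : R) * ↑a₂]) := by rw [hk]
        _ = (Gi * G) * B₁ * (Gi * !![1, (↑a₁⁻¹ : R) * s; 0, (↑a₁⁻¹ : R) * ↑a₂]) := by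
            noncomm_ring
        _ = B₁ * (Gi * !![1, (↑a₁⁻¹ : R) * s; 0, (↑a₁⁻¹ : R) * ↑a₂]) := by
            rw [hGiG, one_mul]
    · rw [Matrix.det_mul, (g⁻¹).prop, one_mul, Matrix.det_fin_two_of]
      have he : ((↑(a₁⁻¹ * a₂) : R)) = 1 * ((↑a₁⁻¹ : R) * ↑a₂) - (↑a₁⁻¹ : R) * s * 0 := by
        push_cast; ring
      exact he ▸ (a₁⁻¹ * a₂).isUnit
    · rw [Matrix.det_mul, (g⁻¹).prop, one_mul, Matrix.det_fin_two_of]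
      ring
  · rintro ⟨s, hβ, hα, M, hMB, hMu, hMdet⟩
    obtain ⟨u, hu⟩ := (Matrix.isUnit_iff_isUnit_det M).mpr hMu
    set k : Matrix (Fin 2) (Fin 2) R := !![1, (↑a₁⁻¹ : R) * s; 0, (↑a₁⁻¹ : R) * ↑a₂]
      with hkdef
    set Mi : Matrix (Fin 2) (Fin 2) R := ↑u⁻¹ with hMi
    have hui : Mi * (↑u : Matrix (Fin 2) (Fin 2) R) = 1 := u.inv_mul
    have huu : (↑u : Matrix (Fin 2) (Fin 2) R) * Mi = 1 := u.mul_inv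
    have hdu : Mi.det * ((↑a₂ : R) * ↑a₁⁻¹) = 1 := by
      rw [← hMdet, ← hu, ← Matrix.det_mul, hui, Matrix.det_one]
    have hdetg : (k * Mi).det = 1 := by
      rw [Matrix.det_mul, hkdef, Matrix.det_fin_two_of]
      linear_combination hdu
    refine ⟨⟨k * Mi, hdetg⟩, s, ?_⟩
    have hcomm : Mi * B₁ = B₁ * Mi := by
      rw [← hu] at hMB
      calc Mi * B₁ = Mi * B₁ * (↑u * Mi) := by rw [huu, mul_one]
        _ = Mi * (B₁ * ↑u) * Mi := by noncomm_ring
        _ = Mi * (↑u * B₁) * Mi := by rw [hMB]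
        _ = (Mi * ↑u) * (B₁ * Mi) := by noncomm_ring
        _ = B₁ * Mi := by rw [hui, one_mul]
    have hk := stmt15_kconj a₁ a₂ α₁ β₁ α₂ β₂ s hβ hα
    set g : Matrix.SpecialLinearGroup (Fin 2) R := ⟨k * Mi, hdetg⟩ with hgdef
    have hgco : (g : Matrix (Fin 2) (Fin 2) R) = k * Mi := rfl
    have hginv : (g : Matrix (Fin 2) (Fin 2) R) *
        ((g⁻¹ : Matrix.SpecialLinearGroup (Fin 2) R) : Matrix (Fin 2) (Fin 2) R) = 1 := by
      rw [← Matrix.SpecialLinearGroup.coe_mul, mul_inv_cancel,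
        Matrix.SpecialLinearGroup.coe_one]
    set C : Matrix (Fin 2) (Fin 2) R :=
      !![0, (↑a₂⁻¹ : R) * α₂; (↑a₂ : R), β₂] + s • (1 : Matrix (Fin 2) (Fin 2) R) with hC
    have hgB : (g : Matrix (Fin 2) (Fin 2) R) * B₁ = C * (g : Matrix (Fin 2) (Fin 2) R) := by
      rw [hgco]
      calc k * Mi * B₁ = k * (Mi * B₁) := by rw [mul_assoc]
        _ = k * (B₁ * Mi) := by rw [hcomm]
        _ = (k * B₁) * Mi := by rw [mul_assoc]
        _ = (C * k) * Mi := by rw [hB₁, hC]; rw [hk]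
        _ = C * (k * Mi) := by rw [mul_assoc]
    calc (g : Matrix (Fin 2) (Fin 2) R) * B₁ *
          ((g⁻¹ : Matrix.SpecialLinearGroup (Fin 2) R) : Matrix (Fin 2) (Fin 2) R)
        = C * ((g : Matrix (Fin 2) (Fin 2) R) *
            ((g⁻¹ : Matrix.SpecialLinearGroup (Fin 2) R) : Matrix (Fin 2) (Fin 2) R)) := by
          rw [hgB, mul_assoc]
      _ = C := by rw [hginv, mul_one]

end Stmt15Aux



/-- for companion matrices `B₁, B₂` over `o_{ℓ'}` (residue characteristic 2),
`g B₁ g⁻¹ = B₂ + sI` for some `g ∈ SL₂(o_{ℓ'})` and scalar `s` iff there is `s` with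
`β₂ = β₁ − 2s`, `α₂ = α₁ − s² + sβ₁` and `a₂a₁⁻¹ ∈ det(C_{GL₂(o_{ℓ'})}(B₁))`. -/
theorem stmt_15 {O : Type*} [CommRing O] [IsDomain O] [IsDiscreteValuationRing O]
    (π : O) (hπ : Irreducible π)
    [IsAdicComplete (Ideal.span {π}) O] [Finite (O ⧸ Ideal.span {π})]
    (hres2 : π ∣ 2)
    (r : ℕ) (hr : 2 ≤ r) (ℓ' : ℕ) (hℓ' : ℓ' = r / 2)
    (a₁ a₂ : (O ⧸ Ideal.span {π ^ ℓ'})ˣ) (α₁ β₁ α₂ β₂ : O ⧸ Ideal.span {π ^ ℓ'}) :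
    (∃ (g : Matrix.SpecialLinearGroup (Fin 2) (O ⧸ Ideal.span {π ^ ℓ'}))
        (s : O ⧸ Ideal.span {π ^ ℓ'}),
        (g : Matrix (Fin 2) (Fin 2) (O ⧸ Ideal.span {π ^ ℓ'})) *
            !![0, ((a₁⁻¹ : (O ⧸ Ideal.span {π ^ ℓ'})ˣ) : O ⧸ Ideal.span {π ^ ℓ'}) * α₁;
               ((a₁ : (O ⧸ Ideal.span {π ^ ℓ'})ˣ) : O ⧸ Ideal.span {π ^ ℓ'}), β₁] *
            ((g⁻¹ : Matrix.SpecialLinearGroup (Fin 2) (O ⧸ Ideal.span {π ^ ℓ'})) :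
              Matrix (Fin 2) (Fin 2) (O ⧸ Ideal.span {π ^ ℓ'})) =
          !![0, ((a₂⁻¹ : (O ⧸ Ideal.span {π ^ ℓ'})ˣ) : O ⧸ Ideal.span {π ^ ℓ'}) * α₂;
             ((a₂ : (O ⧸ Ideal.span {π ^ ℓ'})ˣ) : O ⧸ Ideal.span {π ^ ℓ'}), β₂] +
            s • (1 : Matrix (Fin 2) (Fin 2) (O ⧸ Ideal.span {π ^ ℓ'}))) ↔
      (∃ s : O ⧸ Ideal.span {π ^ ℓ'},
        β₂ = β₁ - 2 * s ∧
        α₂ = α₁ - s ^ 2 + s * β₁ ∧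
        ∃ M : Matrix (Fin 2) (Fin 2) (O ⧸ Ideal.span {π ^ ℓ'}),
          M * !![0, ((a₁⁻¹ : (O ⧸ Ideal.span {π ^ ℓ'})ˣ) : O ⧸ Ideal.span {π ^ ℓ'}) * α₁;
                 ((a₁ : (O ⧸ Ideal.span {π ^ ℓ'})ˣ) : O ⧸ Ideal.span {π ^ ℓ'}), β₁] =
            !![0, ((a₁⁻¹ : (O ⧸ Ideal.span {π ^ ℓ'})ˣ) : O ⧸ Ideal.span {π ^ ℓ'}) * α₁;
               ((a₁ : (O ⧸ Ideal.span {π ^ ℓ'})ˣ) : O ⧸ Ideal.span {π ^ ℓ'}), β₁] * M ∧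
          IsUnit M.det ∧
          M.det = ((a₂ : (O ⧸ Ideal.span {π ^ ℓ'})ˣ) : O ⧸ Ideal.span {π ^ ℓ'}) *
            ((a₁⁻¹ : (O ⧸ Ideal.span {π ^ ℓ'})ˣ) : O ⧸ Ideal.span {π ^ ℓ'})) := by
  exact stmt15_key a₁ a₂ α₁ β₁ α₂ β₂
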